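/- Let k be a complete non-Archimedean valued field, (E, ‖·‖) a finite-dimensional normed k-vector space admitting an orthonormal basis, and F ⊆ E a subspace. Then the quotient norm on E/F admits an orthonormal basis. -/

import Mathlib

section Aux

variable {k : Type*} [NormedField k]

/-- The sup "norm" on `Fin n → k`. -/
private noncomputable def snorm' {n : ℕ} (x : Fin n → k) : ℝ := ⨆ j, ‖x j‖

private lemma snorm'_nonneg {n : ℕ} (x : Fin n → k) : 0 ≤ snorm' x :=
  Real.iSup_nonneg fun j => norm_nonneg _

private lemma le_snorm' {n : ℕ} (x : Fin n → k) (j : Fin n) : ‖x j‖ ≤ snorm' x :=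
  le_ciSup (Finite.bddAbove_range fun j => ‖x j‖) j

private lemma snorm'_le {n : ℕ} {x : Fin n → k} {c : ℝ} (h : ∀ j, ‖x j‖ ≤ c) (hc : 0 ≤ c) :
    snorm' x ≤ c :=
  Real.iSup_le h hc

/-- Inserting a zero coordinate does not change the sup norm. -/
private lemma snorm'_insertNth {n : ℕ} (j0 : Fin (n + 1)) (z : Fin n → k) :
    snorm' (j0.insertNth 0 z) = snorm' z := by
  apply le_antisymm
  · refine snorm'_le (fun j => ?_) (snorm'_nonneg z)
    rcases eq_or_ne j j0 with rfl | hj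
    · simp [Fin.insertNth_apply_same, snorm'_nonneg]
    · obtain ⟨i, rfl⟩ := Fin.exists_succAbove_eq hj
      rw [Fin.insertNth_apply_succAbove]
      exact le_snorm' z i
  · refine snorm'_le (fun i => ?_) (snorm'_nonneg _)
    have := le_snorm' (j0.insertNth 0 z) (j0.succAbove i)
    rwa [Fin.insertNth_apply_succAbove] at this

/-- Key lemma: for a submodule `F` of `k^n` with the sup norm, the quotient norm on
`k^n ⧸ F` admits an orthonormal basis. -/
private theorem keyQ (hk : ∀ x y : k, ‖x + y‖ ≤ max ‖x‖ ‖y‖) :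
    ∀ (n : ℕ) (F : Submodule k (Fin n → k)),
    ∃ (m : ℕ) (b : Module.Basis (Fin m) k ((Fin n → k) ⧸ F)),
      ∀ y : (Fin n → k) ⧸ F,
        sInf {c : ℝ | ∃ x : Fin n → k, Submodule.Quotient.mk x = y ∧ c = snorm' x}
          = ⨆ j, ‖b.repr y j‖ := by
  intro n
  induction n with
  | zero =>
    intro F
    haveI : Subsingleton (Fin 0 → k) := ⟨fun a b => funext fun j => j.elim0⟩
    haveI : Subsingleton ((Fin 0 → k) ⧸ F) :=
      (Submodule.Quotient.mk_surjective F).subsingleton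
    refine ⟨0, Module.Basis.empty _, fun y => ?_⟩
    have hset : {c : ℝ | ∃ x : Fin 0 → k, Submodule.Quotient.mk x = y ∧ c = snorm' x} = {0} := by
      ext c
      constructor
      · rintro ⟨x, -, rfl⟩
        simp [snorm', Real.iSup_of_isEmpty, Set.mem_singleton_iff]
      · rintro rfl
        exact ⟨0, Subsingleton.elim _ _, by simp [snorm', Real.iSup_of_isEmpty]⟩
    rw [hset, csInf_singleton]
    simp [Real.iSup_of_isEmpty]
  | succ n IH =>
    intro F
    by_cases hF : F = ⊥
    · subst hF
      set φ := Submodule.quotEquivOfEqBot (⊥ : Submodule k (Fin (n+1) → k)) rfl with hφ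
      refine ⟨n + 1, (Pi.basisFun k (Fin (n+1))).map φ.symm, fun y => ?_⟩
      have hmkinj : Function.Injective
          (Submodule.Quotient.mk (p := (⊥ : Submodule k (Fin (n+1) → k)))) := by
        intro a b hab
        have := Submodule.Quotient.eq (⊥ : Submodule k (Fin (n+1) → k)) |>.mp hab
        simpa [sub_eq_zero] using this
      have hφmk : ∀ x : Fin (n+1) → k, φ (Submodule.Quotient.mk x) = x := fun x => rfl
      have hmkφ : Submodule.Quotient.mk (φ y) = y := by
        obtain ⟨x, rfl⟩ := Submodule.Quotient.mk_surjective _ y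
        rw [hφmk]
      have hset : {c : ℝ | ∃ x : Fin (n+1) → k, Submodule.Quotient.mk x = y ∧ c = snorm' x}
          = {snorm' (φ y)} := by
        ext c
        constructor
        · rintro ⟨x, hx, rfl⟩
          have : x = φ y := hmkinj (by rw [hx, hmkφ])
          simp [this]
        · rintro rfl
          exact ⟨φ y, hmkφ, rfl⟩
      rw [hset, csInf_singleton]
      have hrepr : ∀ j, ((Pi.basisFun k (Fin (n+1))).map φ.symm).repr y j = φ y j := by
        intro j
        rw [Module.Basis.map_repr]
        simp [Pi.basisFun_repr]
      simp only [hrepr]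
      rfl
    · -- F ≠ ⊥ : pick a nonzero vector, normalize, quotient down one dimension
      obtain ⟨v, hvF, hv0⟩ := (Submodule.ne_bot_iff F).mp hF
      obtain ⟨j0, hj0max⟩ := Finite.exists_max (fun j => ‖v j‖)
      have hvj0 : v j0 ≠ 0 := by
        intro h
        apply hv0
        funext j
        have := hj0max j
        rw [h, norm_zero] at this
        exact norm_le_zero_iff.mp this
      set w : Fin (n+1) → k := (v j0)⁻¹ • v with hw
      have hwF : w ∈ F := F.smul_mem _ hvF
      have hwj0 : w j0 = 1 := by
        simp [hw, Pi.smul_apply, smul_eq_mul, inv_mul_cancel₀ hvj0]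
      have hwle : ∀ j, ‖w j‖ ≤ 1 := by
        intro j
        simp only [hw, Pi.smul_apply, smul_eq_mul, norm_mul, norm_inv]
        rw [inv_mul_le_iff₀ (norm_pos_iff.mpr hvj0), mul_one]
        exact hj0max j
      -- the projection map
      set ρ : (Fin (n+1) → k) →ₗ[k] (Fin n → k) :=
        { toFun := fun x i => x (j0.succAbove i) - x j0 * w (j0.succAbove i)
          map_add' := by
            intro x y; funext i; simp only [Pi.add_apply]; ring
          map_smul' := by
            intro c x; funext i
            simp only [Pi.smul_apply, smul_eq_mul, RingHom.id_apply]; ring } with hρ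
      have hρapp : ∀ (x : Fin (n+1) → k) (i : Fin n),
          ρ x i = x (j0.succAbove i) - x j0 * w (j0.succAbove i) := fun x i => rfl
      have hρsec : ∀ z : Fin n → k, ρ (j0.insertNth 0 z) = z := by
        intro z
        funext i
        rw [hρapp, Fin.insertNth_apply_succAbove, Fin.insertNth_apply_same]
        ring
      have hρker : ∀ x : Fin (n+1) → k, ρ x = 0 → x = x j0 • w := by
        intro x hx
        funext j
        rcases eq_or_ne j j0 with rfl | hj
        · simp [hwj0]
        · obtain ⟨i, rfl⟩ := Fin.exists_succAbove_eq hj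
          have := congrFun hx i
          rw [hρapp] at this
          simp only [Pi.zero_apply] at this
          simp only [Pi.smul_apply, smul_eq_mul]
          exact sub_eq_zero.mp this
      have hρbound : ∀ x : Fin (n+1) → k, snorm' (ρ x) ≤ snorm' x := by
        intro x
        refine snorm'_le (fun i => ?_) (snorm'_nonneg x)
        rw [hρapp, sub_eq_add_neg]
        refine le_trans (hk _ _) (max_le (le_snorm' x _) ?_)
        rw [norm_neg, norm_mul]
        calc ‖x j0‖ * ‖w (j0.succAbove i)‖ ≤ ‖x j0‖ * 1 :=
              mul_le_mul_of_nonneg_left (hwle _) (norm_nonneg _)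
          _ = ‖x j0‖ := mul_one _
          _ ≤ snorm' x := le_snorm' x j0
      set F₁ : Submodule k (Fin n → k) := F.map ρ with hF₁
      have hle : F ≤ LinearMap.ker (F₁.mkQ.comp ρ) := by
        intro x hx
        simp only [LinearMap.mem_ker, LinearMap.comp_apply, Submodule.mkQ_apply,
          Submodule.Quotient.mk_eq_zero]
        exact Submodule.mem_map_of_mem hx
      set f : ((Fin (n+1) → k) ⧸ F) →ₗ[k] ((Fin n → k) ⧸ F₁) := F.liftQ (F₁.mkQ.comp ρ) hle
        with hf
      have hfmk : ∀ x : Fin (n+1) → k,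
          f (Submodule.Quotient.mk x) = Submodule.Quotient.mk (ρ x) := fun x => rfl
      have hcomap : Submodule.comap ρ F₁ = F := by
        apply le_antisymm
        · intro x hx
          obtain ⟨u, huF, hu⟩ := hx
          have hker : ρ (x - u) = 0 := by rw [map_sub, hu, sub_self]
          have : x - u = (x - u) j0 • w := hρker _ hker
          have hxu : x - u ∈ F := this ▸ F.smul_mem _ hwF
          have := F.add_mem hxu huF
          rwa [sub_add_cancel] at this
        · exact Submodule.le_comap_map ρ F
      have hfinj : Function.Injective f := by
        rw [← LinearMap.ker_eq_bot, hf]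
        apply Submodule.ker_liftQ_eq_bot
        rw [LinearMap.ker_comp, Submodule.ker_mkQ, hcomap]
      have hfsurj : Function.Surjective f := by
        intro y'
        obtain ⟨z, rfl⟩ := Submodule.Quotient.mk_surjective F₁ y'
        exact ⟨Submodule.Quotient.mk (j0.insertNth 0 z), by rw [hfmk, hρsec]⟩
      set Φ : ((Fin (n+1) → k) ⧸ F) ≃ₗ[k] ((Fin n → k) ⧸ F₁) :=
        LinearEquiv.ofBijective f ⟨hfinj, hfsurj⟩ with hΦ
      have hΦmk : ∀ x : Fin (n+1) → k,
          Φ (Submodule.Quotient.mk x) = Submodule.Quotient.mk (ρ x) := fun x => hfmk x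
      obtain ⟨m, b₁, hb₁⟩ := IH F₁
      refine ⟨m, b₁.map Φ.symm, fun y => ?_⟩
      have hrepr : ∀ j, (b₁.map Φ.symm).repr y j = b₁.repr (Φ y) j := by
        intro j
        rw [Module.Basis.map_repr]
        simp
      -- compare the two infima
      set A := {c : ℝ | ∃ x : Fin (n+1) → k, Submodule.Quotient.mk x = y ∧ c = snorm' x} with hA
      set B := {c : ℝ | ∃ x : Fin n → k, Submodule.Quotient.mk x = Φ y ∧ c = snorm' x} with hB
      obtain ⟨x₀, hx₀⟩ := Submodule.Quotient.mk_surjective F y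
      have hAne : A.Nonempty := ⟨snorm' x₀, x₀, hx₀, rfl⟩
      have hBne : B.Nonempty := ⟨snorm' (ρ x₀), ρ x₀, by rw [← hΦmk, hx₀], rfl⟩
      have hAbdd : BddBelow A := ⟨0, by rintro c ⟨x, -, rfl⟩; exact snorm'_nonneg x⟩
      have hBbdd : BddBelow B := ⟨0, by rintro c ⟨x, -, rfl⟩; exact snorm'_nonneg x⟩
      have hinf : sInf A = sInf B := by
        apply le_antisymm
        · refine le_csInf hBne ?_
          rintro c ⟨x', hx', rfl⟩
          have hmem : snorm' x' ∈ A := by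
            refine ⟨j0.insertNth 0 x', ?_, (snorm'_insertNth j0 x').symm⟩
            apply hfinj
            show Φ _ = Φ y
            rw [hΦmk, hρsec, hx']
          exact csInf_le hAbdd hmem
        · refine le_csInf hAne ?_
          rintro c ⟨x, hx, rfl⟩
          have hmem : snorm' (ρ x) ∈ B := ⟨ρ x, by rw [← hΦmk, hx], rfl⟩
          exact le_trans (csInf_le hBbdd hmem) (hρbound x)
      rw [hinf, hb₁ (Φ y)]
      exact iSup_congr fun j => by rw [hrepr]

end Aux

/-- Let `k` be a complete non-Archimedean valued field, `(E, N)` a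
finite-dimensional normed `k`-vector space admitting an orthonormal basis, and `F ⊆ E` a
subspace.  Then the quotient norm on `E ⧸ F` admits an orthonormal basis. -/
theorem quotient_norm_orthonormally_decomposable
    {k E : Type*} [NormedField k] [CompleteSpace k]
    (hk : ∀ x y : k, ‖x + y‖ ≤ max ‖x‖ ‖y‖)
    [AddCommGroup E] [Module k E] [FiniteDimensional k E]
    (N : E → ℝ)
    (hN : ∃ (n : ℕ) (e : Module.Basis (Fin n) k E), ∀ x : E, N x = ⨆ j, ‖e.repr x j‖)
    (F : Submodule k E)
    (Nq : E ⧸ F → ℝ)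
    (hNq : ∀ y : E ⧸ F,
      IsGLB {c : ℝ | ∃ x : E, Submodule.Quotient.mk x = y ∧ c = N x} (Nq y)) :
    ∃ (m : ℕ) (b : Module.Basis (Fin m) k (E ⧸ F)), ∀ y : E ⧸ F, Nq y = ⨆ j, ‖b.repr y j‖ := by
  obtain ⟨n, e, hN⟩ := hN
  set φ : E ≃ₗ[k] (Fin n → k) := e.equivFun with hφ
  have hNφ : ∀ x : E, N x = snorm' (φ x) := by
    intro x
    rw [hN x]
    exact iSup_congr fun j => by rw [hφ, Module.Basis.equivFun_apply]
  set F' : Submodule k (Fin n → k) := F.map (φ : E →ₗ[k] (Fin n → k)) with hF'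
  set Ψ : (E ⧸ F) ≃ₗ[k] ((Fin n → k) ⧸ F') := Submodule.Quotient.equiv F F' φ rfl with hΨ
  have hΨmk : ∀ x : E, Ψ (Submodule.Quotient.mk x) = Submodule.Quotient.mk (φ x) := by
    intro x
    rw [hΨ, Submodule.Quotient.equiv_apply, Submodule.mapQ_apply]
    rfl
  obtain ⟨m, b₁, hb₁⟩ := keyQ hk n F'
  refine ⟨m, b₁.map Ψ.symm, fun y => ?_⟩
  have hset : {c : ℝ | ∃ x : E, Submodule.Quotient.mk x = y ∧ c = N x}
      = {c : ℝ | ∃ x' : Fin n → k, Submodule.Quotient.mk x' = Ψ y ∧ c = snorm' x'} := by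
    ext c
    constructor
    · rintro ⟨x, hx, rfl⟩
      exact ⟨φ x, by rw [← hΨmk, hx], hNφ x⟩
    · rintro ⟨x', hx', rfl⟩
      refine ⟨φ.symm x', ?_, by rw [hNφ, LinearEquiv.apply_symm_apply]⟩
      apply Ψ.injective
      rw [hΨmk, LinearEquiv.apply_symm_apply, hx']
  obtain ⟨x₀, hx₀⟩ := Submodule.Quotient.mk_surjective F y
  have hne : {c : ℝ | ∃ x : E, Submodule.Quotient.mk x = y ∧ c = N x}.Nonempty :=
    ⟨N x₀, x₀, hx₀, rfl⟩
  have hval : Nq y = sInf {c : ℝ | ∃ x : E, Submodule.Quotient.mk x = y ∧ c = N x} :=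
    ((hNq y).csInf_eq hne).symm
  rw [hval, hset, hb₁ (Ψ y)]
  refine iSup_congr fun j => ?_
  rw [Module.Basis.map_repr]
  simp
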